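/- arXiv:2202.13222 — 4 statements merged into one kernel-verified Lean document; each statement's English description precedes it below -/
import Mathlib

section
/- Let 1 ≤ k < N and let f be a polynomial in the variables x₁, …, x_k (with complex coefficients), viewed as a polynomial in N variables. Then there exists a unique polynomial g in the variables x₁, …, x_k such that for every x ∈ S^{N−1}(√N), g(x) = (1/N) (Σ_{1≤i<j≤N} (x_i ∂/∂x_j − x_j ∂/∂x_i)² f)(x); moreover this unique polynomial is given explicitly by g = Δ_k f − (r∂_r)_k f + (1/N)(2 (r∂_r)_k f − (r∂_r)_k² f). -/
open MvPolynomial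

/-- The Laplacian `Δ_k = Σ_j ∂²/∂x_j²` on polynomials. -/
noncomputable def lap {k : ℕ} (p : MvPolynomial (Fin k) ℂ) : MvPolynomial (Fin k) ℂ :=
  ∑ j, pderiv j (pderiv j p)

/-- The Cauchy–Euler operator `(r∂_r)_k = Σ_j x_j ∂/∂x_j` on polynomials. -/
noncomputable def euler {k : ℕ} (p : MvPolynomial (Fin k) ℂ) : MvPolynomial (Fin k) ℂ :=
  ∑ j, X j * pderiv j p

/-- The angular momentum operator `x_i ∂/∂x_j − x_j ∂/∂x_i` on polynomials. -/
noncomputable def rot {N : ℕ} (i j : Fin N) (p : MvPolynomial (Fin N) ℂ) :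
    MvPolynomial (Fin N) ℂ :=
  X i * pderiv j p - X j * pderiv i p

/-- The operator `Σ_{i<j} (x_i ∂/∂x_j − x_j ∂/∂x_i)²` on polynomials. -/
noncomputable def ang {N : ℕ} (p : MvPolynomial (Fin N) ℂ) : MvPolynomial (Fin N) ℂ :=
  ∑ i, ∑ j ∈ Finset.Ioi i, rot i j (rot i j p)


lemma pderiv_comm {σ : Type*} [DecidableEq σ] (i j : σ) (p : MvPolynomial σ ℂ) :
    pderiv i (pderiv j p) = pderiv j (pderiv i p) := by
  induction p using MvPolynomial.induction_on' with
  | add p q hp hq => simp [hp, hq]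
  | monomial s a =>
    rcases eq_or_ne i j with rfl | hij
    · rfl
    · simp only [pderiv_monomial]
      rw [tsub_right_comm]
      congr 1
      simp only [Finsupp.tsub_apply, Finsupp.single_apply, if_neg hij, if_neg hij.symm]
      push_cast [Nat.sub_zero]
      ring

/-- summand abbreviation -/
noncomputable def gg {N : ℕ} (i j : Fin N) (F : MvPolynomial (Fin N) ℂ) : MvPolynomial (Fin N) ℂ :=
  X i ^ 2 * pderiv j (pderiv j F) - X i * X j * pderiv i (pderiv j F) - X i * pderiv i F

lemma rot_sq {N : ℕ} {i j : Fin N} (h : i ≠ j) (F : MvPolynomial (Fin N) ℂ) :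
    rot i j (rot i j F) = gg i j F + gg j i F := by
  simp only [rot, gg, map_sub, pderiv_mul, pderiv_X_self, pderiv_X_of_ne h,
    pderiv_X_of_ne h.symm, pderiv_comm j i]
  ring

lemma ang_expand {N : ℕ} (F : MvPolynomial (Fin N) ℂ) :
    ang F = (∑ i, ∑ j, gg i j F) - ∑ i, gg i i F := by
  have h1 : ang F = ∑ i, (∑ j ∈ Finset.Ioi i, gg i j F + ∑ j ∈ Finset.Ioi i, gg j i F) := by
    unfold ang
    refine Finset.sum_congr rfl fun i _ => ?_
    rw [← Finset.sum_add_distrib]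
    refine Finset.sum_congr rfl fun j hj => ?_
    exact rot_sq (ne_of_lt (Finset.mem_Ioi.mp hj)) F
  have h2 : ∑ i, ∑ j ∈ Finset.Ioi i, gg j i F = ∑ i, ∑ j ∈ Finset.Iio i, gg i j F :=
    Finset.sum_comm' (by simp)
  have h3 : ∀ i : Fin N, ∑ j ∈ Finset.Ioi i, gg i j F + ∑ j ∈ Finset.Iio i, gg i j F
      = (∑ j, gg i j F) - gg i i F := by
    intro i
    have hu : Finset.Iio i ∪ Finset.Ici i = Finset.univ := by
      ext x; simp [lt_or_ge]
    have hd : Disjoint (Finset.Iio i) (Finset.Ici i) := by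
      simp [Finset.disjoint_left]
    rw [← hu, Finset.sum_union hd, ← Finset.add_sum_Ioi_eq_sum_Ici]
    abel
  rw [h1, Finset.sum_add_distrib, h2, ← Finset.sum_add_distrib]
  rw [Finset.sum_congr rfl fun i _ => h3 i, Finset.sum_sub_distrib]

lemma euler_euler {N : ℕ} (F : MvPolynomial (Fin N) ℂ) :
    euler (euler F) = euler F + ∑ i, ∑ j, X i * X j * pderiv i (pderiv j F) := by
  unfold euler
  simp only [map_sum, pderiv_mul, Finset.mul_sum, mul_add, Finset.sum_add_distrib]
  have key : ∀ i : Fin N, ∑ j, X i * (pderiv i (X j) * pderiv j F) = X i * pderiv i F := by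
    intro i
    rw [Finset.sum_eq_single i]
    · simp
    · intro b _ hb; simp [pderiv_X_of_ne hb]
    · simp
  rw [Finset.sum_congr rfl fun i _ => key i]
  simp only [mul_assoc]

lemma diag_gg {N : ℕ} (F : MvPolynomial (Fin N) ℂ) :
    ∑ i, gg i i F = - euler F := by
  unfold gg euler
  rw [← Finset.sum_neg_distrib]
  refine Finset.sum_congr rfl fun i _ => ?_
  ring

lemma ang_eq {N : ℕ} (F : MvPolynomial (Fin N) ℂ) :
    ang F = (∑ i, X i ^ 2) * lap F + 2 • euler F - euler (euler F) - N • euler F := by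
  rw [ang_expand, diag_gg]
  unfold gg
  simp only [Finset.sum_sub_distrib]
  rw [← Finset.sum_mul_sum]
  have h2 : ∑ i : Fin N, ∑ _j : Fin N, X i * pderiv i F = N • euler F := by
    simp only [Finset.sum_const, Finset.card_univ, Fintype.card_fin]
    rw [euler, Finset.smul_sum]
  have h3 : ∑ i : Fin N, ∑ j : Fin N, X i * X j * pderiv i (pderiv j F)
      = euler (euler F) - euler F := by
    rw [euler_euler]; ring
  rw [h2, h3, lap]
  abel

lemma pderiv_rename_notin {k N : ℕ} (h : k ≤ N) (f : MvPolynomial (Fin k) ℂ) {j : Fin N}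
    (hj : j ∉ Set.range (Fin.castLE h)) : pderiv j (rename (Fin.castLE h) f) = 0 := by
  apply pderiv_eq_zero_of_notMem_vars
  intro hmem
  obtain ⟨i, -, hi⟩ := mem_vars_rename _ _ hmem
  exact hj ⟨i, hi⟩

lemma sum_range_castLE {k N : ℕ} (h : k ≤ N) {M : Type*} [AddCommMonoid M] (F : Fin N → M)
    (hF : ∀ j, j ∉ Set.range (Fin.castLE h) → F j = 0) :
    ∑ j, F j = ∑ i : Fin k, F (Fin.castLE h i) := by
  classical
  rw [← Finset.sum_image (s := Finset.univ) (g := Fin.castLE h) (f := F)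
    (fun x _ y _ hxy => Fin.castLE_injective h hxy)]
  exact (Finset.sum_subset (Finset.subset_univ _) (fun x _ hx => hF x (by
    intro ⟨i, hi⟩
    exact hx (Finset.mem_image.mpr ⟨i, Finset.mem_univ i, hi⟩)))).symm

lemma lap_rename {k N : ℕ} (h : k ≤ N) (f : MvPolynomial (Fin k) ℂ) :
    lap (rename (Fin.castLE h) f) = rename (Fin.castLE h) (lap f) := by
  unfold lap
  rw [sum_range_castLE h _ (fun j hj => by rw [pderiv_rename_notin h f hj, map_zero]), map_sum]
  refine Finset.sum_congr rfl fun i _ => ?_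
  rw [pderiv_rename (Fin.castLE_injective h), pderiv_rename (Fin.castLE_injective h)]

lemma euler_rename {k N : ℕ} (h : k ≤ N) (f : MvPolynomial (Fin k) ℂ) :
    euler (rename (Fin.castLE h) f) = rename (Fin.castLE h) (euler f) := by
  unfold euler
  rw [sum_range_castLE h _ (fun j hj => by rw [pderiv_rename_notin h f hj, mul_zero]), map_sum]
  refine Finset.sum_congr rfl fun i _ => ?_
  rw [pderiv_rename (Fin.castLE_injective h), map_mul, rename_X]

lemma sphere_eval {k N : ℕ} (hkN : k < N) (f : MvPolynomial (Fin k) ℂ) (x : Fin N → ℝ)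
    (hx : (∑ j, x j ^ 2) = (N : ℝ)) :
    aeval (fun j : Fin k => (x (Fin.castLE hkN.le j) : ℂ))
        (lap f - euler f + ((N : ℂ)⁻¹) • (2 • euler f - euler (euler f)))
      = (1 / (N : ℂ)) *
          aeval (fun j : Fin N => (x j : ℂ)) (ang (rename (Fin.castLE hkN.le) f)) := by
  have hN : (N : ℂ) ≠ 0 := Nat.cast_ne_zero.mpr (by omega)
  rw [ang_eq (rename (Fin.castLE hkN.le) f), lap_rename hkN.le f, euler_rename hkN.le f,
    euler_rename hkN.le (euler f)]
  have hsq : aeval (fun j : Fin N => (x j : ℂ)) ((∑ i, X i ^ 2 : MvPolynomial (Fin N) ℂ)) = (N : ℂ) := by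
    rw [map_sum]
    simp only [map_pow, aeval_X]
    rw [← Complex.ofReal_natCast, ← hx]
    push_cast
    rfl
  simp only [smul_eq_C_mul, nsmul_eq_mul]
  simp only [map_add, map_sub, map_mul, map_natCast, aeval_C, aeval_rename, hsq,
    Algebra.algebraMap_self_apply]
  have hc : ∀ p : MvPolynomial (Fin k) ℂ,
      aeval ((fun j : Fin N => (x j : ℂ)) ∘ Fin.castLE hkN.le) p
        = aeval (fun j : Fin k => (x (Fin.castLE hkN.le j) : ℂ)) p := fun p => rfl
  rw [hc, hc, hc]
  field_simp
  ring

lemma zero_of_box : ∀ (k : ℕ) (p : MvPolynomial (Fin k) ℂ),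
    (∀ y : Fin k → ℝ, (∀ j, |y j| < 1) → eval (fun j => (y j : ℂ)) p = 0) → p = 0 := by
  intro k
  induction k with
  | zero =>
    intro p h
    obtain ⟨a, rfl⟩ := MvPolynomial.C_surjective (Fin 0) p
    have := h (fun j => 0) (fun j => j.elim0)
    simpa using this
  | succ k ih =>
    intro p h
    have key : ∀ z : Fin k → ℝ, (∀ j, |z j| < 1) →
        Polynomial.map (eval (fun j => (z j : ℂ))) (finSuccEquiv ℂ k p) = 0 := by
      intro z hz
      apply Polynomial.eq_zero_of_infinite_isRoot
      apply Set.Infinite.mono (s := (fun t : ℝ => (t : ℂ)) '' Set.Ioo (-1) 1)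
      · rintro _ ⟨t, ht, rfl⟩
        simp only [Set.mem_setOf_eq, Polynomial.IsRoot]
        rw [← eval_eq_eval_mv_eval']
        have hfun : (Fin.cons (t:ℂ) (fun j => (z j : ℂ)) : Fin (k+1) → ℂ)
            = fun j => ((Fin.cons t z : Fin (k+1) → ℝ) j : ℂ) := by
          funext j
          refine Fin.cases ?_ ?_ j <;> simp
        rw [hfun]
        apply h (Fin.cons t z)
        intro j
        refine Fin.cases ?_ ?_ j
        · simpa [abs_lt] using ht
        · intro i; simpa using hz i
      · apply Set.Infinite.image
        · exact fun a _ b _ hab => by exact_mod_cast hab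
        · exact Set.Ioo_infinite (by norm_num)
    have hc : ∀ n : ℕ, (finSuccEquiv ℂ k p).coeff n = 0 := by
      intro n
      apply ih
      intro z hz
      have := key z hz
      have := congrArg (fun q => Polynomial.coeff q n) this
      simpa using this
    have : finSuccEquiv ℂ k p = 0 := Polynomial.ext fun n => by simp [hc n]
    have := congrArg (finSuccEquiv ℂ k).symm this
    simpa using this

lemma aeval_eq_eval' {σ : Type*} (g : σ → ℂ) (p : MvPolynomial σ ℂ) : aeval g p = eval g p := rfl

lemma vanish_of_sphere {k N : ℕ} (hk : 1 ≤ k) (hkN : k < N) (p : MvPolynomial (Fin k) ℂ)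
    (h : ∀ x : Fin N → ℝ, (∑ j, x j ^ 2) = (N : ℝ) →
      aeval (fun j : Fin k => (x (Fin.castLE hkN.le j) : ℂ)) p = 0) : p = 0 := by
  apply zero_of_box k p
  intro y hy
  have hsum : ∑ j, y j ^ 2 ≤ (k : ℝ) := by
    calc ∑ j, y j ^ 2 ≤ ∑ _j : Fin k, (1 : ℝ) := by
          refine Finset.sum_le_sum fun j _ => ?_
          have := abs_lt.mp (hy j)
          nlinarith [this.1, this.2]
      _ = (k : ℝ) := by simp
  have hkNr : (k : ℝ) < N := by exact_mod_cast hkN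
  have hnn : (0:ℝ) ≤ (N : ℝ) - ∑ j, y j ^ 2 := by linarith
  set s : ℝ := Real.sqrt ((N : ℝ) - ∑ j, y j ^ 2) with hs
  set F : ℕ → ℝ := fun m => if h : m < k then y ⟨m, h⟩ else if m = k then s else 0 with hF
  have hxsum : (∑ i : Fin N, (F i.val) ^ 2) = (N : ℝ) := by
    rw [Fin.sum_univ_eq_sum_range (fun m => F m ^ 2) N]
    rw [Finset.range_eq_Ico, ← Finset.sum_Ico_consecutive _ (Nat.zero_le k) hkN.le]
    have h1 : ∑ m ∈ Finset.Ico 0 k, F m ^ 2 = ∑ j, y j ^ 2 := by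
      rw [← Finset.range_eq_Ico, ← Fin.sum_univ_eq_sum_range (fun m => F m ^ 2) k]
      refine Finset.sum_congr rfl fun i _ => ?_
      simp only [hF, dif_pos i.isLt, Fin.eta]
    have h2 : ∑ m ∈ Finset.Ico k N, F m ^ 2 = s ^ 2 := by
      rw [Finset.sum_eq_single_of_mem k (Finset.mem_Ico.mpr ⟨le_refl k, hkN⟩)]
      · simp [hF]
      · intro b hb hbk
        obtain ⟨hkb, -⟩ := Finset.mem_Ico.mp hb
        simp [hF, Nat.not_lt.mpr hkb, hbk]
    rw [h1, h2, hs, Real.sq_sqrt hnn]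
    ring
  have := h (fun i => F i.val) hxsum
  have hfun : (fun j : Fin k => ((y j : ℝ) : ℂ))
      = fun j : Fin k => ((F ((Fin.castLE hkN.le j) : Fin N).val : ℝ) : ℂ) := by
    funext j
    simp only [hF, Fin.coe_castLE, dif_pos j.isLt, Fin.eta]
  rw [← aeval_eq_eval', hfun]
  exact this

/-- for `k < N` and a polynomial `f` in the first `k` variables, there is a unique
polynomial `g` in the first `k` variables agreeing on `S^{N-1}(√N)` with the spherical Laplacian
`(1/N) Σ_{i<j}(x_i∂_j − x_j∂_i)² f`, and `g = Δ_k f − (r∂_r)_k f + (1/N)(2(r∂_r)_k f − (r∂_r)_k² f)`. -/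
theorem stmt4 (k N : ℕ) (hk : 1 ≤ k) (hkN : k < N) (f : MvPolynomial (Fin k) ℂ) :
    (∃! g : MvPolynomial (Fin k) ℂ, ∀ x : Fin N → ℝ, (∑ j, x j ^ 2) = (N : ℝ) →
        aeval (fun j : Fin k => (x (Fin.castLE hkN.le j) : ℂ)) g
          = (1 / (N : ℂ)) *
              aeval (fun j : Fin N => (x j : ℂ)) (ang (rename (Fin.castLE hkN.le) f))) ∧
    (∀ x : Fin N → ℝ, (∑ j, x j ^ 2) = (N : ℝ) →
        aeval (fun j : Fin k => (x (Fin.castLE hkN.le j) : ℂ))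
            (lap f - euler f + ((N : ℂ)⁻¹) • (2 • euler f - euler (euler f)))
          = (1 / (N : ℂ)) *
              aeval (fun j : Fin N => (x j : ℂ)) (ang (rename (Fin.castLE hkN.le) f))) := by
  set G : MvPolynomial (Fin k) ℂ :=
    lap f - euler f + ((N : ℂ)⁻¹) • (2 • euler f - euler (euler f)) with hG
  refine ⟨⟨G, fun x hx => sphere_eval hkN f x hx, ?_⟩, fun x hx => sphere_eval hkN f x hx⟩
  intro g hg
  have hzero : g - G = 0 := by
    apply vanish_of_sphere hk hkN
    intro x hx
    rw [map_sub, hg x hx, hG, sphere_eval hkN f x hx, sub_self]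
  exact sub_eq_zero.mp hzero
end

section
/- Let V be a finite-dimensional complex vector space and let X, Y be linear endomorphisms of V such that [X, Y] = XY − YX = αY for some α ∈ ℂ that is not an integer multiple of 2πi (in particular α ≠ 0). Then exp(X) exp(Y) = exp(X + (α/(1 − e^{−α})) Y), exp(Y) exp(X) = exp(X − (α/(1 − e^{α})) Y), and exp(X + Y) = exp(X) exp(((1 − e^{−α})/α) Y), where exp denotes the operator exponential. -/
open NormedSpace

section Aux

variable {A : Type*} [NormedRing A] [NormedAlgebra ℂ A] [CompleteSpace A]

noncomputable abbrev ratAlg : NormedAlgebra ℚ A := NormedAlgebra.restrictScalars ℚ ℂ A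

lemma exptsum (x : A) : exp x = ∑' n : ℕ, ((n.factorial : ℂ))⁻¹ • x ^ n := by
  rw [exp_eq_tsum ℂ]

lemma hcfac : ∀ n : ℕ, ((n + 1 : ℕ) : ℂ) * α * (((n + 1).factorial : ℂ))⁻¹
    = α * ((n.factorial : ℂ))⁻¹ := by
  intro n
  have h1 : ((n.factorial : ℂ)) ≠ 0 := Nat.cast_ne_zero.mpr n.factorial_ne_zero
  have h2 : (((n + 1 : ℕ)) : ℂ) ≠ 0 := Nat.cast_ne_zero.mpr (Nat.succ_ne_zero n)
  rw [Nat.factorial_succ, Nat.cast_mul, mul_inv, ← mul_assoc]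
  congr 1
  rw [mul_comm _ α, mul_assoc, mul_inv_cancel₀ h2, mul_one]

lemma aux1 {X B : A} {α : ℂ} (h : X * B - B * X = α • B) (n : ℕ) :
    X * B ^ n = B ^ n * X + ((n : ℂ) * α) • B ^ n := by
  have hXB : X * B = B * X + α • B := by rw [← h]; noncomm_ring
  induction n with
  | zero => simp
  | succ n ih =>
    rw [pow_succ, ← mul_assoc, ih, add_mul, smul_mul_assoc, mul_assoc, hXB]
    rw [mul_add, ← mul_assoc, ← pow_succ, mul_smul_comm, ← pow_succ]
    push_cast
    rw [add_mul, one_mul, add_smul]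
    abel

lemma aux2 {X B : A} {α : ℂ} (h : X * B - B * X = α • B) (n : ℕ) :
    X ^ n * B = B * (X + α • 1) ^ n := by
  have hXB : X * B = B * (X + α • 1) := by
    rw [mul_add, mul_smul_comm, mul_one, ← h]; noncomm_ring
  induction n with
  | zero => simp
  | succ n ih =>
    rw [pow_succ, mul_assoc, hXB, ← mul_assoc, ih, mul_assoc, ← pow_succ]

lemma L1 {X B : A} {α : ℂ} (h : X * B - B * X = α • B) :
    X * exp B = exp B * (X + α • B) := by
  have hs : Summable fun n : ℕ => ((n.factorial : ℂ))⁻¹ • B ^ n := expSeries_summable' B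
  have hshift : ∀ n : ℕ, (((n + 1 : ℕ) : ℂ) * α * (((n + 1).factorial : ℂ))⁻¹) • B ^ (n + 1)
      = α • ((((n.factorial : ℂ))⁻¹ • B ^ n) * B) := by
    intro n
    rw [smul_mul_assoc, ← pow_succ, smul_smul, hcfac n]
  have hfs : Summable (fun n : ℕ => ((n : ℂ) * α * ((n.factorial : ℂ))⁻¹) • B ^ n) := by
    rw [← summable_nat_add_iff 1]
    have : (fun n : ℕ => (((n + 1 : ℕ) : ℂ) * α * (((n + 1).factorial : ℂ))⁻¹) • B ^ (n + 1))
        = fun n : ℕ => α • ((((n.factorial : ℂ))⁻¹ • B ^ n) * B) := funext hshift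
    exact this ▸ ((hs.mul_right B).const_smul α)
  calc X * exp B = ∑' n : ℕ, X * (((n.factorial : ℂ))⁻¹ • B ^ n) := by
        rw [exptsum, (hs.tsum_mul_left X)]
    _ = ∑' n : ℕ, (((((n.factorial : ℂ))⁻¹) • B ^ n) * X
          + ((n : ℂ) * α * ((n.factorial : ℂ))⁻¹) • B ^ n) := by
        refine tsum_congr fun n => ?_
        rw [mul_smul_comm, aux1 h n, smul_add, smul_mul_assoc, smul_smul]
        congr 2
        ring
    _ = (∑' n : ℕ, ((((n.factorial : ℂ))⁻¹) • B ^ n) * X)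
          + ∑' n : ℕ, ((n : ℂ) * α * ((n.factorial : ℂ))⁻¹) • B ^ n :=
        Summable.tsum_add (hs.mul_right X) hfs
    _ = exp B * X + exp B * (α • B) := by
        rw [hs.tsum_mul_right, ← exptsum]
        congr 1
        rw [Summable.tsum_eq_zero_add hfs]
        simp only [Nat.cast_zero, zero_mul, Nat.factorial_zero, Nat.cast_one, inv_one, pow_zero,
          zero_smul, zero_add]
        calc ∑' n : ℕ, (((n + 1 : ℕ) : ℂ) * α * (((n + 1).factorial : ℂ))⁻¹) • B ^ (n + 1)
            = ∑' n : ℕ, α • ((((n.factorial : ℂ))⁻¹ • B ^ n) * B) := tsum_congr hshift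
          _ = α • ((∑' n : ℕ, ((n.factorial : ℂ))⁻¹ • B ^ n) * B) := by
              rw [Summable.tsum_const_smul α (hs.mul_right B), (hs.tsum_mul_right B)]
          _ = exp B * (α • B) := by rw [← exptsum, mul_smul_comm]
    _ = exp B * (X + α • B) := by rw [mul_add]

lemma L2 {X B : A} {α : ℂ} (h : X * B - B * X = α • B) :
    exp (X + α • B) = exp (-B) * exp X * exp B := by
  letI : NormedAlgebra ℚ A := ratAlg
  have h1 : exp (-B) * exp B = 1 := by
    rw [← exp_add_of_commute ((Commute.refl B).neg_left), neg_add_cancel, exp_zero]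
  have h2 : exp B * exp (-B) = 1 := by
    rw [← exp_add_of_commute ((Commute.refl B).neg_right), add_neg_cancel, exp_zero]
  set u : Aˣ := ⟨exp B, exp (-B), h2, h1⟩ with hu
  have hconj : X + α • B = (↑u⁻¹ : A) * X * (↑u : A) := by
    show X + α • B = exp (-B) * X * exp B
    rw [mul_assoc, L1 h, ← mul_assoc, h1, one_mul]
  rw [hconj, exp_units_conj' u X]
  rfl

lemma L3 {X B : A} {α : ℂ} (h : X * B - B * X = α • B) :
    exp X * B = Complex.exp α • (B * exp X) := by
  letI : NormedAlgebra ℚ A := ratAlg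
  have hs : Summable fun n : ℕ => ((n.factorial : ℂ))⁻¹ • X ^ n := expSeries_summable' X
  have step1 : exp X * B = B * exp (X + α • 1) := by
    calc exp X * B = ∑' n : ℕ, ((((n.factorial : ℂ))⁻¹) • X ^ n) * B := by
          rw [exptsum, hs.tsum_mul_right]
      _ = ∑' n : ℕ, B * ((((n.factorial : ℂ))⁻¹) • (X + α • 1) ^ n) := by
          refine tsum_congr fun n => ?_
          rw [smul_mul_assoc, aux2 h n, mul_smul_comm]
      _ = B * exp (X + α • 1) := by
          rw [(expSeries_summable' (X + α • 1)).tsum_mul_left, ← exptsum]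
  have halg : exp ((α : ℂ) • (1 : A)) = Complex.exp α • (1 : A) := by
    rw [← Algebra.algebraMap_eq_smul_one,
      ← map_exp (algebraMap ℂ A) (continuous_algebraMap ℂ A),
      ← Complex.exp_eq_exp_ℂ, Algebra.algebraMap_eq_smul_one]
  have hc : Commute (α • (1 : A)) X := by
    simp [Commute, SemiconjBy, smul_mul_assoc, mul_smul_comm]
  rw [step1, add_comm, exp_add_of_commute hc, halg, smul_mul_assoc, one_mul, mul_smul_comm]

lemma L3n {X B : A} {α : ℂ} (h : X * B - B * X = α • B) (n : ℕ) :
    exp X * B ^ n = (Complex.exp α) ^ n • (B ^ n * exp X) := by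
  induction n with
  | zero => simp
  | succ n ih =>
    calc exp X * B ^ (n + 1) = (exp X * B) * B ^ n := by rw [pow_succ', ← mul_assoc]
      _ = Complex.exp α • (B * (exp X * B ^ n)) := by
          rw [L3 h, smul_mul_assoc, mul_assoc]
      _ = Complex.exp α • (B * (Complex.exp α ^ n • (B ^ n * exp X))) := by rw [ih]
      _ = Complex.exp α ^ (n + 1) • (B ^ (n + 1) * exp X) := by
          rw [mul_smul_comm, smul_smul, ← mul_assoc, ← pow_succ', ← pow_succ']

lemma L4 {X B : A} {α : ℂ} (h : X * B - B * X = α • B) (s : ℂ) :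
    exp X * exp (s • B) = exp ((s * Complex.exp α) • B) * exp X := by
  have hs : Summable fun n : ℕ => ((n.factorial : ℂ))⁻¹ • (s • B) ^ n :=
    expSeries_summable' (s • B)
  have hs2 : Summable fun n : ℕ => ((n.factorial : ℂ))⁻¹ • ((s * Complex.exp α) • B) ^ n :=
    expSeries_summable' ((s * Complex.exp α) • B)
  calc exp X * exp (s • B)
      = ∑' n : ℕ, exp X * (((n.factorial : ℂ))⁻¹ • (s • B) ^ n) := by
        rw [exptsum (s • B), hs.tsum_mul_left]
    _ = ∑' n : ℕ, ((((n.factorial : ℂ))⁻¹) • ((s * Complex.exp α) • B) ^ n) * exp X := by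
        refine tsum_congr fun n => ?_
        simp only [smul_pow, mul_smul_comm, smul_mul_assoc, smul_smul]
        rw [L3n h n]
        simp only [smul_smul]
        congr 1
        rw [mul_pow]
        ring
    _ = exp ((s * Complex.exp α) • B) * exp X := by
        rw [hs2.tsum_mul_right, ← exptsum]

lemma master {X B : A} {α : ℂ} (h : X * B - B * X = α • B) :
    exp (X + α • B) = exp X * exp ((1 - Complex.exp (-α)) • B) := by
  letI : NormedAlgebra ℚ A := ratAlg
  have key : exp ((-1 : ℂ) • B) * exp X = exp X * exp ((-Complex.exp (-α)) • B) := by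
    have hl := L4 h (-Complex.exp (-α))
    rw [neg_mul, ← Complex.exp_add, neg_add_cancel, Complex.exp_zero] at hl
    exact hl.symm
  rw [L2 h]
  have hnegB : exp (-B) = exp ((-1 : ℂ) • B) := by rw [neg_smul, one_smul]
  have hB1 : exp B = exp ((1 : ℂ) • B) := by rw [one_smul]
  rw [hnegB, key, hB1, mul_assoc]
  congr 1
  rw [← exp_add_of_commute (((Commute.refl B).smul_left _).smul_right _), ← add_smul]
  congr 1
  ring

end Aux

/-- Baker–Campbell–Hausdorff-type identities for operators `X, Y` on a
finite-dimensional complex vector space satisfying `[X, Y] = αY` with `α` not an integer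
multiple of `2πi`. -/
theorem stmt12 (V : Type*) [NormedAddCommGroup V] [NormedSpace ℂ V] [FiniteDimensional ℂ V]
    (X Y : V →L[ℂ] V) (α : ℂ)
    (hα : ∀ n : ℤ, α ≠ (n : ℂ) * (2 * Real.pi * Complex.I))
    (hcomm : X * Y - Y * X = α • Y) :
    exp X * exp Y = exp (X + (α / (1 - Complex.exp (-α))) • Y) ∧
    exp Y * exp X = exp (X - (α / (1 - Complex.exp α)) • Y) ∧
    exp (X + Y) = exp X * exp (((1 - Complex.exp (-α)) / α) • Y) := by
  haveI : CompleteSpace V := FiniteDimensional.complete ℂ V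
  have hα0 : α ≠ 0 := by simpa using hα 0
  have hexp1 : Complex.exp (-α) ≠ 1 := by
    intro hc
    obtain ⟨n, hn⟩ := Complex.exp_eq_one_iff.mp hc
    exact hα (-n) (by push_cast; linear_combination -hn)
  have hexp2 : Complex.exp α ≠ 1 := by
    intro hc
    obtain ⟨n, hn⟩ := Complex.exp_eq_one_iff.mp hc
    exact hα n (by push_cast; linear_combination hn)
  have h1 : 1 - Complex.exp (-α) ≠ 0 := sub_ne_zero.mpr (Ne.symm hexp1)
  have h2 : 1 - Complex.exp α ≠ 0 := sub_ne_zero.mpr (Ne.symm hexp2)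
  have hexpα : Complex.exp α ≠ 0 := Complex.exp_ne_zero α
  have hsc : ∀ c : ℂ, X * (c • Y) - (c • Y) * X = α • (c • Y) := by
    intro c
    rw [mul_smul_comm, smul_mul_assoc, ← smul_sub, hcomm, smul_comm]
  refine ⟨?_, ?_, ?_⟩
  · have hm := master (hsc (1 - Complex.exp (-α))⁻¹)
    rw [smul_smul, smul_smul, mul_inv_cancel₀ h1, one_smul] at hm
    rw [div_eq_mul_inv, hm]
  · have hYX : exp Y * exp X = exp X * exp (Complex.exp (-α) • Y) := by
      have hl := L4 hcomm (Complex.exp (-α))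
      rw [← Complex.exp_add, neg_add_cancel, Complex.exp_zero, one_smul] at hl
      exact hl.symm
    have hm := master (hsc (Complex.exp (-α) * (1 - Complex.exp (-α))⁻¹))
    rw [smul_smul, smul_smul] at hm
    have hcoef1 : (1 - Complex.exp (-α)) * (Complex.exp (-α) * (1 - Complex.exp (-α))⁻¹)
        = Complex.exp (-α) := by field_simp
    have hcoef2 : α * (Complex.exp (-α) * (1 - Complex.exp (-α))⁻¹)
        = -(α / (1 - Complex.exp α)) := by
      have hEE : Complex.exp (-α) * Complex.exp α = 1 := by
        rw [← Complex.exp_add, neg_add_cancel, Complex.exp_zero]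
      field_simp
      linear_combination -hEE
    rw [hcoef1, hcoef2] at hm
    rw [hYX, ← hm, neg_smul, ← sub_eq_add_neg]
  · have hm := master (hsc α⁻¹)
    rw [smul_smul, smul_smul, mul_inv_cancel₀ hα0, one_smul] at hm
    rw [div_eq_mul_inv, hm]
end

section
/- Let k ≥ 1, T > 0, and let p be a polynomial in the variables x₁, …, x_k (with complex coefficients). Then the series Σ_{n=0}^∞ (1/n!) ((T/2)(Δ_k − (r∂_r)_k))^n p converges in the finite-dimensional space of polynomials of degree at most deg p (equivalently, coefficientwise), and its sum is the polynomial x ↦ (e^{((1−e^{−T})/2) Δ_k} p)(e^{−T/2} x₁, …, e^{−T/2} x_k), where e^{((1−e^{−T})/2) Δ_k} p = Σ_n (1/n!) ((1−e^{−T})/2)^n Δ_k^n p is a finite sum. In other words, e^{(T/2)(Δ_k − (r∂_r)_k)} p = e^{−(T/2)(r∂_r)_k} e^{((1−e^{−T})/2)Δ_k} p. -/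
open MvPolynomial

/-- The (terminating) heat operator `e^{(t/2)Δ_k}` on polynomials. -/
noncomputable def heatOp {k : ℕ} (t : ℝ) (p : MvPolynomial (Fin k) ℂ) :
    MvPolynomial (Fin k) ℂ :=
  ∑ n ∈ Finset.range (p.totalDegree + 1),
    (((t / 2 : ℝ) : ℂ) ^ n / (n.factorial : ℂ)) • lap^[n] p

section Aux

variable {k : ℕ}

lemma coeff_pderiv (j : Fin k) (q : MvPolynomial (Fin k) ℂ) (e : Fin k →₀ ℕ) :
    coeff e (pderiv j q) = ((e j : ℂ) + 1) * coeff (e + Finsupp.single j 1) q := by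
  induction q using MvPolynomial.induction_on' with
  | monomial s a =>
    by_cases h : s = e + Finsupp.single j 1
    · subst h
      rw [pderiv_monomial, coeff_monomial, coeff_monomial, if_pos rfl, if_pos]
      · push_cast [Finsupp.add_apply, Finsupp.single_eq_same]
        ring
      · ext i
        by_cases hij : i = j <;>
          simp [Finsupp.tsub_apply, Finsupp.add_apply, Finsupp.single_apply, hij]
    · rw [pderiv_monomial, coeff_monomial, coeff_monomial, if_neg h, mul_zero]
      by_cases h2 : s - Finsupp.single j 1 = e
      · rw [if_pos h2]
        by_cases h3 : s j = 0
        · simp [h3]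
        · exfalso
          apply h
          ext i
          by_cases hij : i = j
          · subst hij
            have := congrArg (fun f => f i) h2
            simp only [Finsupp.tsub_apply, Finsupp.single_eq_same] at this
            simp [Finsupp.add_apply, Finsupp.single_eq_same, ← this]
            omega
          · have := congrArg (fun f => f i) h2
            simp only [Finsupp.tsub_apply, Finsupp.single_apply, if_neg (Ne.symm hij)] at this
            simp [Finsupp.add_apply, Finsupp.single_apply, Ne.symm hij, ← this]
      · rw [if_neg h2]
  | add p q hp hq => simp [map_add, hp, hq, coeff_add, mul_add]

lemma coeff_lap (q : MvPolynomial (Fin k) ℂ) (e : Fin k →₀ ℕ) :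
    coeff e (lap q) = ∑ j : Fin k,
      ((e j : ℂ) + 1) * ((e j : ℂ) + 2) * coeff (e + Finsupp.single j 2) q := by
  rw [lap, coeff_sum]
  refine Finset.sum_congr rfl fun j _ => ?_
  rw [coeff_pderiv, coeff_pderiv]
  have h1 : e + Finsupp.single j 1 + Finsupp.single j 1 = e + Finsupp.single j 2 := by
    ext i; by_cases h : j = i <;> simp [Finsupp.add_apply, Finsupp.single_apply, h]
  have h2 : ((e + Finsupp.single j 1 : Fin k →₀ ℕ)) j = e j + 1 := by
    simp [Finsupp.add_apply, Finsupp.single_eq_same]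
  rw [h1, h2]
  push_cast; ring

lemma degree_eq_sum_univ (m : Fin k →₀ ℕ) : m.degree = ∑ j : Fin k, m j :=
  Finset.sum_subset (Finset.subset_univ _) (fun _ _ hx => Finsupp.notMem_support_iff.mp hx)

lemma coeff_euler (q : MvPolynomial (Fin k) ℂ) (e : Fin k →₀ ℕ) :
    coeff e (euler q) = (e.degree : ℂ) * coeff e q := by
  rw [euler, coeff_sum]
  have key : ∀ j : Fin k, coeff e (X j * pderiv j q) = (e j : ℂ) * coeff e q := by
    intro j
    rw [coeff_X_mul']
    by_cases h : e j = 0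
    · rw [if_neg (by simp [Finsupp.mem_support_iff, h])]
      simp [h]
    · rw [if_pos (by simp [Finsupp.mem_support_iff, h])]
      rw [coeff_pderiv]
      have h2 : e - Finsupp.single j 1 + Finsupp.single j 1 = e := by
        ext i; by_cases hij : j = i
        · subst hij
          simp only [Finsupp.add_apply, Finsupp.tsub_apply, Finsupp.single_eq_same]
          omega
        · simp [Finsupp.add_apply, Finsupp.tsub_apply, Finsupp.single_apply, hij]
      have h1 : ((e - Finsupp.single j 1 : Fin k →₀ ℕ)) j = e j - 1 := by
        simp [Finsupp.tsub_apply, Finsupp.single_eq_same]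
      rw [h1, h2]
      have : ((e j - 1 : ℕ) : ℂ) + 1 = (e j : ℂ) := by
        have h3 : e j - 1 + 1 = e j := by omega
        calc ((e j - 1 : ℕ) : ℂ) + 1 = ((e j - 1 + 1 : ℕ) : ℂ) := by push_cast; ring
        _ = (e j : ℂ) := by rw [h3]
      rw [this]
  rw [Finset.sum_congr rfl fun j _ => key j, ← Finset.sum_mul, degree_eq_sum_univ]
  push_cast; ring

lemma degree_add (a b : Fin k →₀ ℕ) : (a + b).degree = a.degree + b.degree := by
  rw [degree_eq_sum_univ, degree_eq_sum_univ, degree_eq_sum_univ, ← Finset.sum_add_distrib]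
  simp [Finsupp.add_apply]

lemma degree_single (j : Fin k) (n : ℕ) : (Finsupp.single j n).degree = n := by
  rw [degree_eq_sum_univ]
  simp [Finsupp.single_apply]

lemma isHomogeneous_iff {q : MvPolynomial (Fin k) ℂ} {d : ℕ} :
    q.IsHomogeneous d ↔ ∀ e : Fin k →₀ ℕ, coeff e q ≠ 0 → e.degree = d := by
  unfold MvPolynomial.IsHomogeneous MvPolynomial.IsWeightedHomogeneous
  simp_rw [Finsupp.degree_eq_weight_one]
  exact Iff.rfl

lemma lap_isHomogeneous {q : MvPolynomial (Fin k) ℂ} {d : ℕ} (hq : q.IsHomogeneous d) :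
    (lap q).IsHomogeneous (d - 2) := by
  rw [isHomogeneous_iff]
  intro e he
  rw [coeff_lap] at he
  obtain ⟨j, -, hj⟩ := Finset.exists_ne_zero_of_sum_ne_zero he
  have hc : coeff (e + Finsupp.single j 2) q ≠ 0 := fun h => hj (by rw [h, mul_zero])
  have := isHomogeneous_iff.1 hq _ hc
  rw [degree_add, degree_single] at this
  omega

lemma lap_eq_zero_of_lt {q : MvPolynomial (Fin k) ℂ} {d : ℕ} (hq : q.IsHomogeneous d)
    (hd : d < 2) : lap q = 0 := by
  ext e
  rw [coeff_lap, coeff_zero]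
  refine Finset.sum_eq_zero fun j _ => ?_
  have : coeff (e + Finsupp.single j 2) q = 0 := by
    by_contra h
    have := isHomogeneous_iff.1 hq _ h
    rw [degree_add, degree_single] at this
    omega
  rw [this, mul_zero]

lemma lap_zero : lap (0 : MvPolynomial (Fin k) ℂ) = 0 := by simp [lap]

lemma lap_iter_zero (n : ℕ) : lap^[n] (0 : MvPolynomial (Fin k) ℂ) = 0 := by
  induction n with
  | zero => rfl
  | succ n ihn => rw [Function.iterate_succ_apply, lap_zero]; exact ihn

lemma lap_iter_isHomogeneous {q : MvPolynomial (Fin k) ℂ} {d : ℕ} (hq : q.IsHomogeneous d)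
    (n : ℕ) : (lap^[n] q).IsHomogeneous (d - 2 * n) := by
  induction n generalizing q d with
  | zero => simpa using hq
  | succ n ih =>
    rw [Function.iterate_succ_apply]
    have h2 : d - 2 - 2 * n = d - 2 * (n + 1) := by omega
    have := ih (lap_isHomogeneous hq)
    rwa [h2] at this

lemma lap_iter_eq_zero {q : MvPolynomial (Fin k) ℂ} {d : ℕ} (hq : q.IsHomogeneous d)
    {n : ℕ} (hn : d < 2 * n) : lap^[n] q = 0 := by
  induction n generalizing q d with
  | zero => omega
  | succ n ih =>
    rw [Function.iterate_succ_apply]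
    by_cases hd : d < 2
    · rw [lap_eq_zero_of_lt hq hd, lap_iter_zero]
    · exact ih (lap_isHomogeneous hq) (by omega)

lemma euler_eq_smul {q : MvPolynomial (Fin k) ℂ} {d : ℕ} (hq : q.IsHomogeneous d) :
    euler q = (d : ℂ) • q := by
  ext e
  rw [coeff_euler, coeff_smul, smul_eq_mul]
  by_cases h : coeff e q = 0
  · rw [h, mul_zero, mul_zero]
  · rw [isHomogeneous_iff.1 hq _ h]

/-- The Laplacian as a linear map. -/
noncomputable def lapLM (k : ℕ) : MvPolynomial (Fin k) ℂ →ₗ[ℂ] MvPolynomial (Fin k) ℂ where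
  toFun := lap
  map_add' p q := by simp [lap, map_add, Finset.sum_add_distrib]
  map_smul' c p := by simp [lap, map_smul, Finset.smul_sum]

/-- The Euler operator as a linear map. -/
noncomputable def eulerLM (k : ℕ) : MvPolynomial (Fin k) ℂ →ₗ[ℂ] MvPolynomial (Fin k) ℂ where
  toFun := euler
  map_add' p q := by simp [euler, map_add, mul_add, Finset.sum_add_distrib]
  map_smul' c p := by simp [euler, map_smul, Finset.smul_sum, mul_smul_comm]

/-- The Hermite operator as a linear map. -/
noncomputable def HLM (k : ℕ) : MvPolynomial (Fin k) ℂ →ₗ[ℂ] MvPolynomial (Fin k) ℂ :=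
  lapLM k - eulerLM k

lemma HLM_apply (q : MvPolynomial (Fin k) ℂ) : HLM k q = lap q - euler q := rfl

lemma H_iter_eq (n : ℕ) (q : MvPolynomial (Fin k) ℂ) :
    (fun q => lap q - euler q)^[n] q = ((HLM k) ^ n) q := by
  rw [Module.End.pow_apply]
  congr 1

lemma lap_iter_eq_pow (n : ℕ) (q : MvPolynomial (Fin k) ℂ) :
    lap^[n] q = ((lapLM k) ^ n) q := by
  rw [Module.End.pow_apply]
  congr 1

/-- finite-difference sums -/
noncomputable def SS (d : ℕ) (n j : ℕ) : ℂ :=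
  ∑ i ∈ Finset.range (j + 1), (-1) ^ (j - i) * (j.choose i : ℂ) * (2 * i - d) ^ n

/-- coefficients of `H^n` in terms of powers of the Laplacian -/
noncomputable def aa (d : ℕ) : ℕ → ℕ → ℂ
  | 0, 0 => 1
  | 0, _ + 1 => 0
  | n + 1, 0 => (-(d : ℂ)) * aa d n 0
  | n + 1, j + 1 => aa d n j - ((d : ℂ) - 2 * (j + 1)) * aa d n (j + 1)

lemma SS_zero (d j : ℕ) : SS d 0 j = if j = 0 then 1 else 0 := by
  have : ∀ i ∈ Finset.range (j + 1), (-1 : ℂ) ^ (j - i) * (j.choose i : ℂ) * (2 * i - d) ^ 0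
      = (-1) ^ j * ((-1) ^ i * (j.choose i : ℂ)) := by
    intro i hi
    rw [Finset.mem_range] at hi
    have h1 : (-1 : ℂ) ^ (j - i) * (-1) ^ i = (-1) ^ j := by
      rw [← pow_add]; congr 1; omega
    have h2 : ((-1 : ℂ) ^ i) * ((-1) ^ i) = 1 := by
      rw [← pow_add]; exact Even.neg_one_pow ⟨i, rfl⟩
    rw [pow_zero, mul_one, ← h1]
    linear_combination (-(-1 : ℂ) ^ (j - i) * (j.choose i : ℂ)) * h2
  rw [SS, Finset.sum_congr rfl this, ← Finset.mul_sum]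
  have key : ∑ i ∈ Finset.range (j + 1), ((-1 : ℂ) ^ i * (j.choose i : ℂ))
      = if j = 0 then 1 else 0 := by
    have h3 := Int.alternating_sum_range_choose (n := j)
    have h4 := congrArg (fun z : ℤ => (z : ℂ)) h3
    push_cast [apply_ite (fun z : ℤ => (z : ℂ))] at h4
    convert h4 using 2 <;> norm_num
  rw [key]
  split
  · subst ‹j = 0›; norm_num
  · ring

lemma SS_succ_zero (d n : ℕ) : SS d (n + 1) 0 = (-(d : ℂ)) * SS d n 0 := by
  simp [SS, pow_succ]; ring

lemma SS_succ (d n j : ℕ) :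
    SS d (n + 1) (j + 1) =
      2 * (j + 1) * SS d n j - ((d : ℂ) - 2 * (j + 1)) * SS d n (j + 1) := by
  have expand : SS d (n + 1) (j + 1) =
      (∑ i ∈ Finset.range (j + 2), (-1) ^ (j + 1 - i) * ((j + 1).choose i : ℂ)
        * (2 * i - d) ^ n * (-2) * ((j + 1 : ℂ) - i))
      + ((2 * (j + 1) : ℂ) - d) * SS d n (j + 1) := by
    rw [SS, SS, Finset.mul_sum, ← Finset.sum_add_distrib]
    refine Finset.sum_congr rfl fun i _ => ?_
    rw [pow_succ]
    ring
  rw [expand]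
  have key : ∀ i ∈ Finset.range (j + 2),
      (-1 : ℂ) ^ (j + 1 - i) * ((j + 1).choose i : ℂ) * (2 * i - d) ^ n * (-2) * ((j + 1 : ℂ) - i)
      = 2 * (j + 1) * ((if i ≤ j then (-1) ^ (j - i) * (j.choose i : ℂ) * (2 * i - d) ^ n else 0)) := by
    intro i hi
    rw [Finset.mem_range] at hi
    by_cases hij : i ≤ j
    · rw [if_pos hij]
      have hc : ((j + 1).choose i : ℂ) * ((j + 1 : ℂ) - i) = ((j + 1) : ℂ) * (j.choose i : ℂ) := by
        have hnat := Nat.choose_mul_succ_eq j i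
        have h2 := congrArg (Nat.cast : ℕ → ℂ) hnat
        push_cast [Nat.cast_sub (show i ≤ j + 1 by omega)] at h2
        linear_combination -h2
      have hsign : (-1 : ℂ) ^ (j + 1 - i) = -(-1 : ℂ) ^ (j - i) := by
        have : j + 1 - i = (j - i) + 1 := by omega
        rw [this, pow_succ]; ring
      rw [hsign]
      calc -(-1 : ℂ) ^ (j - i) * ((j + 1).choose i : ℂ) * (2 * i - d) ^ n * (-2) * ((j + 1 : ℂ) - i)
          = 2 * (-1 : ℂ) ^ (j - i) * (2 * i - d) ^ n * (((j + 1).choose i : ℂ) * ((j + 1 : ℂ) - i)) := by ring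
        _ = 2 * (-1 : ℂ) ^ (j - i) * (2 * i - d) ^ n * ((j + 1 : ℂ) * (j.choose i : ℂ)) := by rw [hc]
        _ = 2 * (j + 1) * ((-1) ^ (j - i) * (j.choose i : ℂ) * (2 * i - d) ^ n) := by ring
    · rw [if_neg hij]
      have hi2 : i = j + 1 := by omega
      subst hi2
      norm_num
  rw [Finset.sum_congr rfl key, ← Finset.mul_sum]
  have : ∑ i ∈ Finset.range (j + 2),
      (if i ≤ j then (-1 : ℂ) ^ (j - i) * (j.choose i : ℂ) * (2 * i - d) ^ n else 0) = SS d n j := by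
    rw [← Finset.sum_filter]
    rw [show (Finset.range (j + 2)).filter (fun i => i ≤ j) = Finset.range (j + 1) by
      ext i; simp only [Finset.mem_range, Finset.mem_filter]; omega]
    rfl
  rw [this]
  ring

lemma aa_eq (d : ℕ) : ∀ n j, aa d n j = SS d n j / (2 ^ j * (j.factorial : ℂ)) := by
  intro n
  induction n with
  | zero =>
    intro j
    rw [SS_zero]
    match j with
    | 0 => simp [aa]
    | j + 1 => simp [aa]
  | succ n ih =>
    intro j
    match j with
    | 0 => rw [aa, SS_succ_zero, ih 0]; simp
    | j + 1 =>
      rw [aa, SS_succ, ih j, ih (j + 1)]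
      have h2 : (2 : ℂ) ^ (j + 1) * ((j + 1).factorial : ℂ) ≠ 0 :=
        mul_ne_zero (pow_ne_zero _ two_ne_zero)
          (Nat.cast_ne_zero.2 (Nat.factorial_ne_zero _))
      have h1 : (2 : ℂ) ^ j * (j.factorial : ℂ) ≠ 0 :=
        mul_ne_zero (pow_ne_zero _ two_ne_zero)
          (Nat.cast_ne_zero.2 (Nat.factorial_ne_zero _))
      push_cast [Nat.factorial_succ] at h2 ⊢
      field_simp
      ring

lemma binom_exp (d : ℕ) (t : ℂ) (j : ℕ) :
    ∑ i ∈ Finset.range (j + 1),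
      (-1 : ℂ) ^ (j - i) * (j.choose i : ℂ) * Complex.exp (t * (2 * i - d))
    = Complex.exp (-(t * d)) * (Complex.exp (2 * t) - 1) ^ j := by
  rw [sub_pow]
  rw [Finset.mul_sum]
  refine Finset.sum_congr rfl fun i hi => ?_
  rw [Finset.mem_range] at hi
  have hexp : Complex.exp (t * (2 * i - d))
      = Complex.exp (-(t * d)) * Complex.exp (2 * t) ^ i := by
    rw [← Complex.exp_nat_mul, ← Complex.exp_add]
    congr 1
    ring
  have hsign : (-1 : ℂ) ^ (j - i) = (-1 : ℂ) ^ (i + j) := by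
    have : i + j = (j - i) + 2 * i := by omega
    rw [this, pow_add, pow_mul]
    norm_num
  rw [hexp, hsign]
  norm_num
  ring

lemma hasSum_aa (d : ℕ) (t : ℂ) (j : ℕ) :
    HasSum (fun n : ℕ => t ^ n / (n.factorial : ℂ) * aa d n j)
      (Complex.exp (-(t * d)) * (Complex.exp (2 * t) - 1) ^ j
        / (2 ^ j * (j.factorial : ℂ))) := by
  have step : ∀ i ∈ Finset.range (j + 1),
      HasSum (fun n : ℕ => (-1 : ℂ) ^ (j - i) * (j.choose i : ℂ) * ((t * (2 * i - d)) ^ n / (n.factorial : ℂ)))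
        ((-1 : ℂ) ^ (j - i) * (j.choose i : ℂ) * Complex.exp (t * (2 * i - d))) := by
    intro i _
    have := NormedSpace.expSeries_div_hasSum_exp (t * (2 * i - d))
    rw [← Complex.exp_eq_exp_ℂ] at this
    exact this.mul_left _
  have hsum := (hasSum_sum step).div_const (2 ^ j * (j.factorial : ℂ))
  rw [binom_exp] at hsum
  convert hsum using 2 with n
  case e'_3 => rfl
  rw [aa_eq]
  have h1 : t ^ n / (n.factorial : ℂ) * (SS d n j / (2 ^ j * (j.factorial : ℂ)))
      = (t ^ n / (n.factorial : ℂ) * SS d n j) / (2 ^ j * (j.factorial : ℂ)) := by ring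
  rw [h1]
  congr 1
  rw [SS, Finset.mul_sum]
  refine Finset.sum_congr rfl fun i _ => ?_
  rw [mul_pow]
  ring

lemma euler_lap_iter {q : MvPolynomial (Fin k) ℂ} {d : ℕ} (hq : q.IsHomogeneous d) (j : ℕ) :
    euler (lap^[j] q) = ((d : ℂ) - 2 * j) • lap^[j] q := by
  by_cases h : 2 * j ≤ d
  · rw [euler_eq_smul (lap_iter_isHomogeneous hq j)]
    congr 1
    push_cast [Nat.cast_sub h]
    ring
  · rw [lap_iter_eq_zero hq (by omega), smul_zero]
    simp [euler]

lemma aa_rec (d n j : ℕ) :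
    aa d (n + 1) j = (if j = 0 then 0 else aa d n (j - 1)) - ((d : ℂ) - 2 * j) * aa d n j := by
  match j with
  | 0 => rw [aa]; norm_num
  | j + 1 => rw [aa]; norm_num

lemma H_iter_homog {q : MvPolynomial (Fin k) ℂ} {d : ℕ} (hq : q.IsHomogeneous d) (n : ℕ) :
    ((HLM k) ^ n) q = ∑ j ∈ Finset.range (d + 1), aa d n j • lap^[j] q := by
  induction n with
  | zero =>
    rw [pow_zero, Module.End.one_apply]
    rw [Finset.sum_eq_single_of_mem 0 (Finset.mem_range.2 (by omega))]
    · rw [show aa d 0 0 = 1 from rfl, one_smul, Function.iterate_zero_apply]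
    · intro j _ hj
      match j, hj with
      | j + 1, _ => rw [show aa d 0 (j + 1) = 0 from rfl, zero_smul]
  | succ n ih =>
    rw [pow_succ', Module.End.mul_apply, ih, map_sum]
    have term : ∀ j, HLM k (aa d n j • lap^[j] q)
        = aa d n j • lap^[j + 1] q - (aa d n j * ((d : ℂ) - 2 * j)) • lap^[j] q := by
      intro j
      rw [map_smul, HLM_apply, euler_lap_iter hq j, smul_sub, Function.iterate_succ_apply',
        smul_smul]
    rw [Finset.sum_congr rfl fun j _ => term j, Finset.sum_sub_distrib]
    have shift : ∑ j ∈ Finset.range (d + 1), aa d n j • lap^[j + 1] q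
        = ∑ j ∈ Finset.range (d + 1), (if j = 0 then 0 else aa d n (j - 1)) • lap^[j] q := by
      rw [Finset.sum_range_succ (fun j => aa d n j • lap^[j + 1] q) d,
        lap_iter_eq_zero hq (show d < 2 * (d + 1) by omega), smul_zero, add_zero,
        Finset.sum_range_succ' (fun j => (if j = 0 then (0:ℂ) else aa d n (j - 1)) • lap^[j] q) d]
      simp
    rw [shift, ← Finset.sum_sub_distrib]
    refine Finset.sum_congr rfl fun j _ => ?_
    rw [aa_rec, sub_smul, mul_comm]

lemma aeval_scale {q : MvPolynomial (Fin k) ℂ} {d : ℕ} (hq : q.IsHomogeneous d) (c : ℂ) :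
    aeval (fun j : Fin k => (C c : MvPolynomial (Fin k) ℂ) * X j) q = c ^ d • q := by
  conv_lhs => rw [← support_sum_monomial_coeff q]
  conv_rhs => rw [← support_sum_monomial_coeff q]
  rw [map_sum, Finset.smul_sum]
  refine Finset.sum_congr rfl fun m hm => ?_
  have hdeg : m.degree = d := isHomogeneous_iff.1 hq m (mem_support_iff.mp hm)
  rw [aeval_monomial]
  have hprod : (m.prod fun i e => ((C c : MvPolynomial (Fin k) ℂ) * X i) ^ e)
      = C (c ^ d) * m.prod fun i e => (X i : MvPolynomial (Fin k) ℂ) ^ e := by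
    rw [Finsupp.prod, Finsupp.prod]
    have : ∀ i ∈ m.support, ((C c : MvPolynomial (Fin k) ℂ) * X i) ^ m i
        = C (c ^ m i) * (X i : MvPolynomial (Fin k) ℂ) ^ m i := by
      intro i _
      rw [mul_pow, C_pow]
    rw [Finset.prod_congr rfl this, Finset.prod_mul_distrib, ← map_prod,
      Finset.prod_pow_eq_pow_sum]
    congr 2
    rw [show (∑ i ∈ m.support, m i) = d from hdeg]
  rw [hprod]
  rw [show (algebraMap ℂ (MvPolynomial (Fin k) ℂ)) (coeff m q) = C (coeff m q) from rfl]
  rw [monomial_eq, smul_eq_C_mul]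
  ring

lemma scalar_eq (T : ℝ) {d n : ℕ} (h : 2 * n ≤ d) :
    (((1 - Real.exp (-T)) / 2 : ℝ) : ℂ) ^ n / (n.factorial : ℂ)
      * ((Real.exp (-T / 2) : ℝ) : ℂ) ^ (d - 2 * n)
    = Complex.exp (-((T : ℂ) / 2 * d)) * (Complex.exp (2 * ((T : ℂ) / 2)) - 1) ^ n
      / (2 ^ n * (n.factorial : ℂ)) := by
  have h2t : 2 * ((T : ℂ) / 2) = (T : ℂ) := by ring
  rw [h2t]
  have hc : ((Real.exp (-T / 2) : ℝ) : ℂ) = Complex.exp (-(T : ℂ) / 2) := by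
    rw [Complex.ofReal_exp]; norm_num
  have hpow : ((Real.exp (-T / 2) : ℝ) : ℂ) ^ (d - 2 * n)
      = Complex.exp (((d - 2 * n : ℕ) : ℂ) * (-(T : ℂ) / 2)) := by
    rw [hc, ← Complex.exp_nat_mul]
  have hcast : ((d - 2 * n : ℕ) : ℂ) = (d : ℂ) - 2 * n := by
    push_cast [Nat.cast_sub h]; ring
  rw [hpow, hcast]
  have hsplit : ((d : ℂ) - 2 * n) * (-(T : ℂ) / 2) = -((T : ℂ) / 2 * d) + (n : ℂ) * (T : ℂ) := by
    ring
  rw [hsplit, Complex.exp_add, Complex.exp_nat_mul]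
  have hre : ((Real.exp (-T) : ℝ) : ℂ) = Complex.exp (-(T : ℂ)) := by
    rw [Complex.ofReal_exp]; push_cast; ring_nf
  set E := Complex.exp (-((T : ℂ) / 2 * d)) with hE
  set X := Complex.exp (T : ℂ) with hX
  set Y := Complex.exp (-(T : ℂ)) with hY
  have hXY : Y * X = 1 := by rw [hX, hY, ← Complex.exp_add]; norm_num
  have key : (1 - Y) ^ n * X ^ n = (X - 1) ^ n := by
    rw [← mul_pow]
    congr 1
    linear_combination -hXY
  have h2n : (2 : ℂ) ^ n ≠ 0 := pow_ne_zero _ two_ne_zero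
  have hfac : ((n.factorial : ℕ) : ℂ) ≠ 0 := Nat.cast_ne_zero.2 (Nat.factorial_ne_zero _)
  push_cast [hre]
  field_simp
  have hA : (1 / 2 + Y * (-1 / 2)) ^ n * (2 : ℂ) ^ n = (1 - Y) ^ n := by
    rw [← mul_pow]; congr 1; ring
  linear_combination E * X ^ n * hA + E * key

end Aux

theorem stmt13 (k : ℕ) (hk : 1 ≤ k) (T : ℝ) (hT : 0 < T) (p : MvPolynomial (Fin k) ℂ)
    (m : Fin k →₀ ℕ) :
    HasSum
      (fun n : ℕ => ((T : ℂ) / 2) ^ n / (n.factorial : ℂ) *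
        coeff m ((fun q => lap q - euler q)^[n] p))
      (coeff m
        (aeval (fun j : Fin k => (C ((Real.exp (-T / 2) : ℝ) : ℂ) : MvPolynomial (Fin k) ℂ) * X j)
          (heatOp (1 - Real.exp (-T)) p))) := by
  classical
  have main : HasSum
      (fun n : ℕ => ∑ d ∈ Finset.range (p.totalDegree + 1), ∑ j ∈ Finset.range (d + 1),
        (((T : ℂ) / 2) ^ n / (n.factorial : ℂ) * aa d n j)
          * coeff m (lap^[j] (homogeneousComponent d p)))
      (∑ d ∈ Finset.range (p.totalDegree + 1), ∑ j ∈ Finset.range (d + 1),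
        (Complex.exp (-((T : ℂ) / 2 * d)) * (Complex.exp (2 * ((T : ℂ) / 2)) - 1) ^ j
          / (2 ^ j * (j.factorial : ℂ)))
          * coeff m (lap^[j] (homogeneousComponent d p))) := by
    refine hasSum_sum fun d _ => ?_
    refine hasSum_sum fun j _ => ?_
    exact (hasSum_aa d ((T : ℂ) / 2) j).mul_right _
  have step1 : (fun n : ℕ => ((T : ℂ) / 2) ^ n / (n.factorial : ℂ) *
      coeff m ((fun q => lap q - euler q)^[n] p))
      = fun n : ℕ => ∑ d ∈ Finset.range (p.totalDegree + 1), ∑ j ∈ Finset.range (d + 1),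
        (((T : ℂ) / 2) ^ n / (n.factorial : ℂ) * aa d n j)
          * coeff m (lap^[j] (homogeneousComponent d p)) := by
    funext n
    rw [H_iter_eq]
    have e1 : ((HLM k) ^ n) p
        = ∑ d ∈ Finset.range (p.totalDegree + 1), ((HLM k) ^ n) (homogeneousComponent d p) := by
      conv_lhs => rw [← sum_homogeneousComponent p]
      rw [map_sum]
    rw [e1, coeff_sum, Finset.mul_sum]
    refine Finset.sum_congr rfl fun d _ => ?_
    rw [H_iter_homog (homogeneousComponent_isHomogeneous d p), coeff_sum, Finset.mul_sum]
    refine Finset.sum_congr rfl fun j _ => ?_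
    rw [coeff_smul, smul_eq_mul]
    ring
  have step3 : coeff m
      (aeval (fun j : Fin k => (C ((Real.exp (-T / 2) : ℝ) : ℂ) : MvPolynomial (Fin k) ℂ) * X j)
        (heatOp (1 - Real.exp (-T)) p))
      = ∑ d ∈ Finset.range (p.totalDegree + 1), ∑ j ∈ Finset.range (d + 1),
        (Complex.exp (-((T : ℂ) / 2 * d)) * (Complex.exp (2 * ((T : ℂ) / 2)) - 1) ^ j
          / (2 ^ j * (j.factorial : ℂ)))
          * coeff m (lap^[j] (homogeneousComponent d p)) := by
    have e3 : ∀ n : ℕ, lap^[n] p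
        = ∑ d ∈ Finset.range (p.totalDegree + 1), lap^[n] (homogeneousComponent d p) := by
      intro n
      rw [lap_iter_eq_pow]
      conv_lhs => rw [← sum_homogeneousComponent p]
      rw [map_sum]
      exact Finset.sum_congr rfl fun d _ => (lap_iter_eq_pow n _).symm
    have e4 : heatOp (1 - Real.exp (-T)) p
        = ∑ n ∈ Finset.range (p.totalDegree + 1), ∑ d ∈ Finset.range (p.totalDegree + 1),
          ((((1 - Real.exp (-T)) / 2 : ℝ) : ℂ) ^ n / (n.factorial : ℂ))
            • lap^[n] (homogeneousComponent d p) := by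
      rw [heatOp]
      refine Finset.sum_congr rfl fun n _ => ?_
      rw [e3 n, Finset.smul_sum]
    rw [e4, map_sum, coeff_sum]
    have e5 : ∀ n : ℕ, coeff m
        ((aeval (fun j : Fin k => (C ((Real.exp (-T / 2) : ℝ) : ℂ) : MvPolynomial (Fin k) ℂ) * X j))
          (∑ d ∈ Finset.range (p.totalDegree + 1),
            ((((1 - Real.exp (-T)) / 2 : ℝ) : ℂ) ^ n / (n.factorial : ℂ))
              • lap^[n] (homogeneousComponent d p)))
        = ∑ d ∈ Finset.range (p.totalDegree + 1),
            ((((1 - Real.exp (-T)) / 2 : ℝ) : ℂ) ^ n / (n.factorial : ℂ))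
              * (((Real.exp (-T / 2) : ℝ) : ℂ) ^ (d - 2 * n)
                * coeff m (lap^[n] (homogeneousComponent d p))) := by
      intro n
      rw [map_sum, coeff_sum]
      refine Finset.sum_congr rfl fun d _ => ?_
      rw [map_smul,
        aeval_scale (lap_iter_isHomogeneous (homogeneousComponent_isHomogeneous d p) n)
          ((Real.exp (-T / 2) : ℝ) : ℂ),
        coeff_smul, coeff_smul, smul_eq_mul, smul_eq_mul]
    rw [Finset.sum_congr rfl fun n _ => e5 n, Finset.sum_comm]
    refine Finset.sum_congr rfl fun d hd => ?_
    have hdD : d ≤ p.totalDegree := by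
      have := Finset.mem_range.1 hd; omega
    have eqterm : ∀ n : ℕ,
        ((((1 - Real.exp (-T)) / 2 : ℝ) : ℂ) ^ n / (n.factorial : ℂ))
          * (((Real.exp (-T / 2) : ℝ) : ℂ) ^ (d - 2 * n)
            * coeff m (lap^[n] (homogeneousComponent d p)))
        = (Complex.exp (-((T : ℂ) / 2 * d)) * (Complex.exp (2 * ((T : ℂ) / 2)) - 1) ^ n
            / (2 ^ n * (n.factorial : ℂ)))
            * coeff m (lap^[n] (homogeneousComponent d p)) := by
      intro n
      by_cases h2n : 2 * n ≤ d
      · rw [← mul_assoc, scalar_eq T h2n]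
      · rw [lap_iter_eq_zero (homogeneousComponent_isHomogeneous d p) (by omega)]
        simp
    rw [Finset.sum_congr rfl fun n _ => eqterm n]
    refine (Finset.sum_subset (Finset.range_subset_range.2 (by omega : d + 1 ≤ p.totalDegree + 1))
      fun n _ hn => ?_).symm
    rw [lap_iter_eq_zero (homogeneousComponent_isHomogeneous d p)
      (by have := Finset.mem_range.not.1 hn; omega)]
    simp
  rw [step1, step3]
  exact main
end

section
/- Let N ≥ 2 and b > 0. Define Φ on the set TS^{N−1}(b) = {(x, p) ∈ ℝ^N × ℝ^N : |x| = b, x·p = 0} by Φ(x, p) = cosh(|p|/b) x + i (b/|p|) sinh(|p|/b) p when p ≠ 0, and Φ(x, 0) = x. Then Φ is a bijection from TS^{N−1}(b) onto the quadric Q^{N−1}(b) = {a ∈ ℂ^N : a₁² + ⋯ + a_N² = b²}. -/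
lemma aux_sum_sq_zero {N : ℕ} (v : Fin N → ℝ) : (∑ i, v i ^ 2) = 0 ↔ v = 0 := by
  rw [Finset.sum_eq_zero_iff_of_nonneg (fun i _ => sq_nonneg _)]
  simp [funext_iff, pow_eq_zero_iff]

lemma aux_sum_sq_nonneg {N : ℕ} (v : Fin N → ℝ) : 0 ≤ ∑ i, v i ^ 2 :=
  Finset.sum_nonneg fun i _ => sq_nonneg _

lemma aux_sum_sq_pos {N : ℕ} {v : Fin N → ℝ} (hv : v ≠ 0) : 0 < ∑ i, v i ^ 2 :=
  lt_of_le_of_ne (aux_sum_sq_nonneg v) (fun h => hv ((aux_sum_sq_zero v).mp h.symm))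

lemma aux_complex_sum {N : ℕ} (A B : Fin N → ℝ) :
    (∑ j, ((A j : ℂ) + Complex.I * (B j : ℂ)) ^ 2) =
      (((∑ j, A j ^ 2) - (∑ j, B j ^ 2) : ℝ) : ℂ) +
        Complex.I * ((2 * ∑ j, A j * B j : ℝ) : ℂ) := by
  have h : ∀ j : Fin N, ((A j : ℂ) + Complex.I * (B j : ℂ)) ^ 2 =
      ((A j ^ 2 - B j ^ 2 : ℝ) : ℂ) + Complex.I * ((2 * (A j * B j) : ℝ) : ℂ) := by
    intro j
    have hI : (Complex.I : ℂ) ^ 2 = -1 := Complex.I_sq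
    push_cast
    ring_nf
    rw [hI]
    ring
  rw [Finset.sum_congr rfl (fun j _ => h j)]
  push_cast
  rw [Finset.sum_add_distrib, Finset.sum_sub_distrib]
  congr 1
  simp only [Finset.mul_sum]

lemma aux_quadric {N : ℕ} {b : ℝ} {a : Fin N → ℂ} (ha : (∑ j, a j ^ 2) = (b : ℂ) ^ 2) :
    (∑ j, ((a j).re ^ 2 - (a j).im ^ 2)) = b ^ 2 ∧
      (∑ j, (a j).re * (a j).im) = 0 := by
  have h1 := congrArg Complex.re ha
  have h2 := congrArg Complex.im ha
  simp only [Complex.re_sum, Complex.im_sum, sq, Complex.mul_re, Complex.mul_im,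
    Complex.ofReal_re, Complex.ofReal_im] at h1 h2
  have e1 : ∑ j, ((a j).re ^ 2 - (a j).im ^ 2) = ∑ x, ((a x).re * (a x).re - (a x).im * (a x).im) := by
    apply Finset.sum_congr rfl; intro j _; ring
  have e2 : ∑ x : Fin N, ((a x).re * (a x).im + (a x).im * (a x).re) = 2 * ∑ j, (a j).re * (a j).im := by
    rw [Finset.mul_sum]; apply Finset.sum_congr rfl; intro j _; ring
  rw [e2] at h2
  constructor
  · rw [e1, h1]; ring
  · linarith

lemma aux_sum_const_mul_sq {N : ℕ} (c : ℝ) (v : Fin N → ℝ) :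
    (∑ j, (c * v j) ^ 2) = c ^ 2 * ∑ j, v j ^ 2 := by
  rw [Finset.mul_sum]; apply Finset.sum_congr rfl; intro j _; ring

lemma aux_sum_mul_mul {N : ℕ} (c d : ℝ) (x v : Fin N → ℝ) :
    (∑ j, (c * x j) * (d * v j)) = (c * d) * ∑ j, x j * v j := by
  rw [Finset.mul_sum]; apply Finset.sum_congr rfl; intro j _; ring

/-- the map `Φ(x, p) = cosh(|p|/b) x + i (b/|p|) sinh(|p|/b) p` (with
`Φ(x, 0) = x`) is a bijection from the tangent bundle
`TS^{N-1}(b) = {(x,p) : |x| = b, x·p = 0}` onto the quadric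
`Q^{N-1}(b) = {a ∈ ℂ^N : a₁² + ⋯ + a_N² = b²}`. -/
theorem stmt17 (N : ℕ) (hN : 2 ≤ N) (b : ℝ) (hb : 0 < b) :
    Set.BijOn
      (fun xp : (Fin N → ℝ) × (Fin N → ℝ) => fun j : Fin N =>
        if xp.2 = 0 then ((xp.1 j : ℝ) : ℂ)
        else
          ((Real.cosh (Real.sqrt (∑ i, xp.2 i ^ 2) / b) * xp.1 j : ℝ) : ℂ) +
            Complex.I * ((b / Real.sqrt (∑ i, xp.2 i ^ 2) *
              Real.sinh (Real.sqrt (∑ i, xp.2 i ^ 2) / b) * xp.2 j : ℝ) : ℂ))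
      {xp : (Fin N → ℝ) × (Fin N → ℝ) |
        (∑ j, xp.1 j ^ 2) = b ^ 2 ∧ (∑ j, xp.1 j * xp.2 j) = 0}
      {a : Fin N → ℂ | (∑ j, a j ^ 2) = (b : ℂ) ^ 2} := by
  classical
  set G : (Fin N → ℂ) → (Fin N → ℝ) × (Fin N → ℝ) := fun a =>
    (fun j => b * (a j).re / Real.sqrt (b ^ 2 + ∑ i, (a i).im ^ 2),
     fun j => if (∑ i, (a i).im ^ 2) = 0 then 0
       else b * Real.arsinh (Real.sqrt (∑ i, (a i).im ^ 2) / b) /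
         Real.sqrt (∑ i, (a i).im ^ 2) * (a j).im) with hGdef
  refine Set.InvOn.bijOn (f' := G) ⟨?_, ?_⟩ ?_ ?_
  · -- LeftInvOn G f s
    rintro ⟨x, p⟩ ⟨hx, hxp⟩
    by_cases hp : p = 0
    · have hfa : ((fun xp : (Fin N → ℝ) × (Fin N → ℝ) => fun j : Fin N =>
          if xp.2 = 0 then ((xp.1 j : ℝ) : ℂ)
          else
            ((Real.cosh (Real.sqrt (∑ i, xp.2 i ^ 2) / b) * xp.1 j : ℝ) : ℂ) +
              Complex.I * ((b / Real.sqrt (∑ i, xp.2 i ^ 2) *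
                Real.sinh (Real.sqrt (∑ i, xp.2 i ^ 2) / b) * xp.2 j : ℝ) : ℂ)) (x, p)) =
          fun j : Fin N => ((x j : ℝ) : ℂ) := by
        funext j; simp [hp]
      rw [hfa, hGdef]
      refine Prod.ext ?_ ?_
      · funext j
        simp [Real.sqrt_sq hb.le, hb.ne']
      · funext j
        simp [hp]
    · have hS : 0 < ∑ i, p i ^ 2 := aux_sum_sq_pos hp
      have hr : 0 < Real.sqrt (∑ i, p i ^ 2) := Real.sqrt_pos.mpr hS
      set r := Real.sqrt (∑ i, p i ^ 2) with hrdef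
      have hr2 : r ^ 2 = ∑ i, p i ^ 2 := Real.sq_sqrt hS.le
      have hrb : 0 < r / b := div_pos hr hb
      have hsinh : 0 < Real.sinh (r / b) := Real.sinh_pos_iff.mpr hrb
      have hcosh : 0 < Real.cosh (r / b) := (Real.cosh_pos _)
      have hfa : ((fun xp : (Fin N → ℝ) × (Fin N → ℝ) => fun j : Fin N =>
          if xp.2 = 0 then ((xp.1 j : ℝ) : ℂ)
          else
            ((Real.cosh (Real.sqrt (∑ i, xp.2 i ^ 2) / b) * xp.1 j : ℝ) : ℂ) +
              Complex.I * ((b / Real.sqrt (∑ i, xp.2 i ^ 2) *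
                Real.sinh (Real.sqrt (∑ i, xp.2 i ^ 2) / b) * xp.2 j : ℝ) : ℂ)) (x, p)) =
          fun j : Fin N =>
            ((Real.cosh (r / b) * x j : ℝ) : ℂ) +
              Complex.I * ((b / r * Real.sinh (r / b) * p j : ℝ) : ℂ) := by
        funext j; simp [hp, hrdef]
      have hT : (∑ i, (b / r * Real.sinh (r / b) * p i) ^ 2) = (b * Real.sinh (r / b)) ^ 2 := by
        rw [aux_sum_const_mul_sq, ← hr2]
        field_simp
      have hsqrtT : Real.sqrt (∑ i, (b / r * Real.sinh (r / b) * p i) ^ 2)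
          = b * Real.sinh (r / b) := by
        rw [hT, Real.sqrt_sq (by positivity)]
      have hbT : Real.sqrt (b ^ 2 + ∑ i, (b / r * Real.sinh (r / b) * p i) ^ 2)
          = b * Real.cosh (r / b) := by
        rw [hT]
        have h2 : b ^ 2 + (b * Real.sinh (r / b)) ^ 2 = (b * Real.cosh (r / b)) ^ 2 := by
          nlinarith [Real.cosh_sq_sub_sinh_sq (r / b)]
        rw [h2, Real.sqrt_sq (by positivity)]
      have hTne : (∑ i, (b / r * Real.sinh (r / b) * p i) ^ 2) ≠ 0 := by
        rw [hT]; positivity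
      rw [hfa, hGdef]
      refine Prod.ext ?_ ?_
      · funext j
        simp only [Complex.add_re, Complex.ofReal_re, Complex.mul_re, Complex.I_re,
          Complex.I_im, Complex.ofReal_im, Complex.add_im, Complex.mul_im, zero_mul,
          one_mul, mul_zero, sub_zero, zero_sub, zero_add, add_zero, neg_zero]
        rw [hbT]
        field_simp
      · funext j
        simp only [Complex.add_im, Complex.ofReal_im, Complex.mul_im, Complex.I_re,
          Complex.I_im, Complex.ofReal_re, Complex.add_re, Complex.mul_re, zero_mul,
          one_mul, mul_zero, sub_zero, zero_sub, zero_add, add_zero, neg_zero]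
        rw [if_neg hTne, hsqrtT]
        rw [show b * Real.sinh (r / b) / b = Real.sinh (r / b) by field_simp]
        rw [Real.arsinh_sinh]
        field_simp
  · -- RightInvOn G f t
    intro a ha
    simp only [Set.mem_setOf_eq] at ha
    by_cases hS : (∑ i, (a i).im ^ 2) = 0
    · have hv : ∀ j, (a j).im = 0 := fun j =>
        congrFun ((aux_sum_sq_zero fun i => (a i).im).mp hS) j
      have hG2 : (G a).2 = 0 := by
        funext j; simp [hGdef, hS]
      have hG1 : ∀ j, (G a).1 j = (a j).re := by
        intro j
        simp only [hGdef, hS]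
        rw [add_zero, Real.sqrt_sq hb.le]
        field_simp
      funext j
      beta_reduce
      rw [if_pos hG2, hG1 j]
      apply Complex.ext
      · simp
      · simp [hv j]
    · have hSpos : 0 < ∑ i, (a i).im ^ 2 :=
        lt_of_le_of_ne (aux_sum_sq_nonneg _) (Ne.symm hS)
      set S := ∑ i, (a i).im ^ 2 with hSdef
      have hs : 0 < Real.sqrt S := Real.sqrt_pos.mpr hSpos
      have hs2 : Real.sqrt S ^ 2 = S := Real.sq_sqrt hSpos.le
      have har : 0 < Real.arsinh (Real.sqrt S / b) :=
        Real.arsinh_pos_iff.mpr (div_pos hs hb)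
      set C := b * Real.arsinh (Real.sqrt S / b) / Real.sqrt S with hCdef
      have hC : 0 < C := by positivity
      have hGa : G a = (fun j => b * (a j).re / Real.sqrt (b ^ 2 + S),
                        fun j => C * (a j).im) := by
        rw [hGdef]
        refine Prod.ext ?_ ?_ <;> funext j
        · rfl
        · show (if S = 0 then (0 : ℝ)
              else b * Real.arsinh (Real.sqrt S / b) / Real.sqrt S * (a j).im) = C * (a j).im
          rw [if_neg hS, hCdef]
      have hPne : (fun j : Fin N => C * (a j).im) ≠ 0 := by
        intro h
        apply hS
        rw [hSdef]
        apply (aux_sum_sq_zero _).mpr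
        funext i
        have h2 := congrFun h i
        simp only [Pi.zero_apply] at h2 ⊢
        rcases mul_eq_zero.mp h2 with h' | h'
        · exact absurd h' hC.ne'
        · exact h'
      have hsum2 : (∑ i, (C * (a i).im) ^ 2) = C ^ 2 * S := by
        rw [aux_sum_const_mul_sq, hSdef]
      have hrr : Real.sqrt (∑ i, (C * (a i).im) ^ 2) = b * Real.arsinh (Real.sqrt S / b) := by
        rw [hsum2, ← hs2, ← mul_pow, Real.sqrt_sq (by positivity), hCdef]
        field_simp
        rw [Real.sqrt_sq hs.le]
      have hdivb : b * Real.arsinh (Real.sqrt S / b) / b = Real.arsinh (Real.sqrt S / b) := by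
        field_simp
      have hsqb : 0 < Real.sqrt (b ^ 2 + S) := Real.sqrt_pos.mpr (by positivity)
      rw [hGa]
      have hfa : ((fun xp : (Fin N → ℝ) × (Fin N → ℝ) => fun j : Fin N =>
          if xp.2 = 0 then ((xp.1 j : ℝ) : ℂ)
          else
            ((Real.cosh (Real.sqrt (∑ i, xp.2 i ^ 2) / b) * xp.1 j : ℝ) : ℂ) +
              Complex.I * ((b / Real.sqrt (∑ i, xp.2 i ^ 2) *
                Real.sinh (Real.sqrt (∑ i, xp.2 i ^ 2) / b) * xp.2 j : ℝ) : ℂ))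
          (fun j => b * (a j).re / Real.sqrt (b ^ 2 + S), fun j => C * (a j).im)) =
          fun j : Fin N =>
            ((Real.cosh ((b * Real.arsinh (Real.sqrt S / b)) / b) *
              (b * (a j).re / Real.sqrt (b ^ 2 + S)) : ℝ) : ℂ) +
              Complex.I * ((b / (b * Real.arsinh (Real.sqrt S / b)) *
                Real.sinh ((b * Real.arsinh (Real.sqrt S / b)) / b) * (C * (a j).im) : ℝ) : ℂ) := by
        funext j
        show (if (fun j : Fin N => C * (a j).im) = 0 then _ else _) = _
        rw [if_neg hPne, hrr]
      rw [hfa]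
      funext j
      apply Complex.ext
      · simp only [Complex.add_re, Complex.ofReal_re, Complex.mul_re, Complex.I_re,
          Complex.I_im, Complex.ofReal_im, zero_mul, one_mul, mul_zero, sub_zero,
          zero_sub, zero_add, add_zero, neg_zero]
        rw [hdivb, Real.cosh_arsinh]
        rw [show (1 : ℝ) + (Real.sqrt S / b) ^ 2 = (b ^ 2 + S) / b ^ 2 by
          rw [div_pow, hs2]; field_simp]
        rw [Real.sqrt_div (by positivity) _, Real.sqrt_sq hb.le]
        field_simp
      · simp only [Complex.add_im, Complex.ofReal_im, Complex.mul_im, Complex.I_re,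
          Complex.I_im, Complex.ofReal_re, zero_mul, one_mul, mul_zero, sub_zero,
          zero_sub, zero_add, add_zero, neg_zero]
        rw [hdivb, Real.sinh_arsinh, hCdef]
        field_simp
  · -- MapsTo f s t
    rintro ⟨x, p⟩ ⟨hx, hxp⟩
    by_cases hp : p = 0
    · simp only [Set.mem_setOf_eq, hp, eq_self_iff_true, if_true]
      have h : (∑ j, ((x j : ℝ) : ℂ) ^ 2) = ((∑ j, x j ^ 2 : ℝ) : ℂ) := by push_cast; rfl
      rw [h]
      rw [show (∑ j, x j ^ 2) = b ^ 2 from hx]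
      push_cast; rfl
    · set r := Real.sqrt (∑ i, p i ^ 2) with hrdef
      have hS : 0 < ∑ i, p i ^ 2 := aux_sum_sq_pos hp
      have hr : 0 < r := Real.sqrt_pos.mpr hS
      have hr2 : r ^ 2 = ∑ i, p i ^ 2 := Real.sq_sqrt hS.le
      simp only [Set.mem_setOf_eq, if_neg hp]
      rw [aux_complex_sum]
      rw [aux_sum_const_mul_sq, aux_sum_const_mul_sq, aux_sum_mul_mul, hx, hxp]
      have hmain : Real.cosh (r / b) ^ 2 * b ^ 2 -
          (b / r * Real.sinh (r / b)) ^ 2 * (∑ i, p i ^ 2) = b ^ 2 := by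
        rw [← hr2]
        have h1 := Real.cosh_sq_sub_sinh_sq (r / b)
        field_simp
        nlinarith [h1]
      rw [hmain]
      simp
  · -- MapsTo G t s
    intro a ha
    simp only [Set.mem_setOf_eq] at ha ⊢
    obtain ⟨hre, him⟩ := aux_quadric ha
    set S := ∑ i, (a i).im ^ 2 with hSdef
    have hSnn : 0 ≤ S := aux_sum_sq_nonneg _
    have hbS : 0 < b ^ 2 + S := by positivity
    have hsq : Real.sqrt (b ^ 2 + S) ^ 2 = b ^ 2 + S := Real.sq_sqrt hbS.le
    have hsqpos : 0 < Real.sqrt (b ^ 2 + S) := Real.sqrt_pos.mpr hbS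
    have hu : (∑ j, (a j).re ^ 2) = b ^ 2 + S := by
      have : (∑ j, ((a j).re ^ 2 - (a j).im ^ 2)) = (∑ j, (a j).re ^ 2) - S := by
        rw [hSdef, Finset.sum_sub_distrib]
      linarith [this ▸ hre]
    constructor
    · have e : ∀ j : Fin N, (b * (a j).re / Real.sqrt (b ^ 2 + S)) ^ 2
          = (b / Real.sqrt (b ^ 2 + S)) ^ 2 * (a j).re ^ 2 := fun j => by ring
      rw [Finset.sum_congr rfl (fun j _ => e j), ← Finset.mul_sum, hu]
      field_simp
      rw [hsq]
    · by_cases hS : S = 0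
      · simp [hGdef, ← hSdef, hS]
      · simp only [hGdef, ← hSdef, if_neg hS]
        have e : ∀ j : Fin N, (b * (a j).re / Real.sqrt (b ^ 2 + S)) *
            (b * Real.arsinh (Real.sqrt S / b) / Real.sqrt S * (a j).im)
            = (b / Real.sqrt (b ^ 2 + S) * (b * Real.arsinh (Real.sqrt S / b) / Real.sqrt S)) *
              ((a j).re * (a j).im) := fun j => by ring
        rw [Finset.sum_congr rfl (fun j _ => e j), ← Finset.mul_sum, him, mul_zero]
end
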